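/- Let d ≥ 2. Work in the complexified Clifford algebra of the real vector space with orthonormal basis {e_{c,0}, e_{c,1} : c a d-cube of the cubical lattice ℤ^d} (with respect to the standard positive-definite quadratic form), so that the generators γ_c := ι(e_{c,0}) and γ'_c := ι(e_{c,1}) satisfy γ_c² = γ'_c² = 1 and any two distinct generators anticommute. For a (d−1)-cell σ of the lattice perpendicular to the coordinate direction i, let ⁺σ and ⁻σ be the two d-cubes containing σ on its positive and negative x_i sides, and set (L(σ), R(σ)) = (⁻σ, ⁺σ) if i + d is odd and (L(σ), R(σ)) = (⁺σ, ⁻σ) if i + d is even. Define the hopping operator S_σ := i·γ_{L(σ)}·γ'_{R(σ)}. Then for any two (d−1)-cells σ, σ' of the lattice: S_σ S_{σ'} = (−1)^{∫ (𝟙_σ ∪_{d−2} 𝟙_{σ'} + 𝟙_{σ'} ∪_{d−2} 𝟙_σ)} · S_{σ'} S_σ. -/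

import Mathlib

/-- The three possible entries of a cell label of the hypercube:
`dot` = `•` (a spanned direction), `pls` = `+`, `mns` = `−`. -/
inductive Sgn : Type
  | dot : Sgn
  | pls : Sgn
  | mns : Sgn
  deriving DecidableEq

instance instFintypeSgn : Fintype Sgn :=
  ⟨{Sgn.dot, Sgn.pls, Sgn.mns}, fun x => by cases x <;> simp⟩

/-- A cell of the `d`-dimensional hypercube, labeled by a tuple in `{•,+,−}^d`. -/
abbrev Cell (d : ℕ) := Fin d → Sgn

/-- A `ℤ₂`-cochain on the `d`-dimensional hypercube. -/
abbrev Cochain (d : ℕ) := Cell d → ZMod 2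

/-- The top cell `(•,…,•)`. -/
def topCell (d : ℕ) : Cell d := fun _ => Sgn.dot

/-- The set of coordinates of a cell labeled `•`. -/
def dots {d : ℕ} (w : Cell d) : Finset (Fin d) :=
  Finset.univ.filter (fun j => w j = Sgn.dot)

/-- The coboundary of a `ℤ₂`-cochain: `(δα)(w)` is the sum of `α` over all cells obtained
from `w` by replacing exactly one entry equal to `•` by `+` or by `−`. -/
def delta {d : ℕ} (α : Cochain d) : Cochain d := fun w =>
  ∑ j ∈ dots w, (α (Function.update w j Sgn.pls) + α (Function.update w j Sgn.mns))

/-- The set of coordinates where both `z` and `z'` are `•`. -/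
def bothDot {d : ℕ} (z z' : Cell d) : Finset (Fin d) :=
  Finset.univ.filter (fun j => z j = Sgn.dot ∧ z' j = Sgn.dot)

/-- The allowed values of `(z_j, z'_j)` at a coordinate `j` not in the common-`•` set `I`:
`(+,•)` or `(•,−)` when `ℓ(j) = #{i ∈ I : i < j}` is even, and `(−,•)` or `(•,+)` when it
is odd. -/
def pairCond {d : ℕ} (I : Finset (Fin d)) (j : Fin d) (a b : Sgn) : Prop :=
  if (I.filter (fun i => i < j)).card % 2 = 0 then
    (a = Sgn.pls ∧ b = Sgn.dot) ∨ (a = Sgn.dot ∧ b = Sgn.mns)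
  else
    (a = Sgn.mns ∧ b = Sgn.dot) ∨ (a = Sgn.dot ∧ b = Sgn.pls)

/-- The pairs `(z,z')` appearing in the `m`-th higher cup product evaluated on the cell `w`:
the entries of `w` equal to `+` or `−` are fixed in both arguments, there are exactly `m`
coordinates where both `z` and `z'` are `•`, and at the remaining `•`-coordinates of `w`
the parity condition `pairCond` holds. -/
def IntPair {d : ℕ} (m : ℕ) (w z z' : Cell d) : Prop :=
  (∀ j, w j ≠ Sgn.dot → z j = w j ∧ z' j = w j) ∧
    (bothDot z z').card = m ∧
    ∀ j, w j = Sgn.dot → j ∉ bothDot z z' → pairCond (bothDot z z') j (z j) (z' j)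

open Classical in
/-- The finite set of pairs in `Int_m` relative to the cell `w`. -/
noncomputable def intPairs {d : ℕ} (m : ℕ) (w : Cell d) : Finset (Cell d × Cell d) :=
  Finset.univ.filter (fun p => IntPair m w p.1 p.2)

/-- The higher cup product `α ∪_m β` of `ℤ₂`-cochains:
`(α ∪_m β)(w) = Σ_{(z,z') ∈ Int_m(w)} α(z)·β(z')`. -/
noncomputable def cup {d : ℕ} (m : ℕ) (α β : Cochain d) : Cochain d := fun w =>
  ∑ p ∈ intPairs m w, α p.1 * β p.2

/-- A point of the cubical lattice `ℤ^d`. -/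
abbrev Pt (d : ℕ) := Fin d → ℤ

/-- A cell of the cubical lattice `ℤ^d`: a pair `(x, S)` with `x ∈ ℤ^d` and
`S ⊆ {1,…,d}`, representing `∏_{i∈S}[x_i, x_i+1] × ∏_{i∉S}{x_i}`;
its dimension is `|S|`, and a `d`-cube is a cell with `S = univ`. -/
abbrev LatCell (d : ℕ) := Pt d × Finset (Fin d)

/-- A `ℤ₂`-cochain on the cubical lattice `ℤ^d`. -/
abbrev LatCochain (d : ℕ) := LatCell d → ZMod 2

/-- The pairs `(z,z')` of tuples in `{•,+,−}^d` appearing in the `m`-th higher cup product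
evaluated on a cell with spanned directions `S`: entries outside `S` are a fixed dummy
value (`+`, irrelevant to the evaluated subcells), there are exactly `m` coordinates where
both `z` and `z'` are `•`, and at the remaining coordinates of `S` the parity condition
`pairCond` of `Int_m` holds. -/
def IntPairS {d : ℕ} (m : ℕ) (S : Finset (Fin d)) (z z' : Fin d → Sgn) : Prop :=
  (∀ j ∉ S, z j = Sgn.pls ∧ z' j = Sgn.pls) ∧
    (bothDot z z').card = m ∧
    ∀ j ∈ S, j ∉ bothDot z z' → pairCond (bothDot z z') j (z j) (z' j)

/-- The subcell of the lattice cell `(x, S)` determined by the tuple `z` on the spanned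
directions `S`: direction `j ∈ S` with `z j = •` stays spanned, `z j = +` picks the larger
face (coordinate `x j + 1`), `z j = −` picks the smaller face (coordinate `x j`);
coordinates outside `S` are held fixed. -/
def cellFrom {d : ℕ} (x : Pt d) (S : Finset (Fin d)) (z : Fin d → Sgn) : LatCell d :=
  (fun j => if j ∈ S ∧ z j = Sgn.pls then x j + 1 else x j,
    S.filter (fun j => z j = Sgn.dot))

open Classical in
/-- The higher cup product `α ∪_m β` of `ℤ₂`-cochains on the cubical lattice `ℤ^d`,
evaluated on each cell via the identification of its subcells with tuples in `{•,+,−}^d`,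
using the hypercubic formula `(α ∪_m β)(w) = Σ_{(z,z') ∈ Int_m} α(z) β(z')`. -/
noncomputable def latCup {d : ℕ} (m : ℕ) (α β : LatCochain d) : LatCochain d := fun w =>
  ∑ p ∈ (Finset.univ.filter
      (fun p : (Fin d → Sgn) × (Fin d → Sgn) => IntPairS m w.2 p.1 p.2)),
    α (cellFrom w.1 w.2 p.1) * β (cellFrom w.1 w.2 p.2)

/-- Coboundary of a lattice `ℤ₂`-cochain: `(δα)(w)` is the sum of `α` over the boundary
cells of `w` (the cells obtained by unspanning one direction of `w` to its smaller or
larger face). -/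
def latDelta {d : ℕ} (α : LatCochain d) : LatCochain d := fun w =>
  ∑ j ∈ w.2,
    (α (w.1, w.2.erase j) + α (Function.update w.1 j (w.1 j + 1), w.2.erase j))

/-- The indicator cochain of a lattice cell. -/
def indLat {d : ℕ} (c : LatCell d) : LatCochain d := fun w => if w = c then 1 else 0

/-- `∫γ`: the sum of the values of a lattice cochain over all `d`-cubes of the lattice
(as a `finsum`; the cochains to which this is applied have finite support). -/
noncomputable def intLat {d : ℕ} (α : LatCochain d) : ZMod 2 :=
  ∑ᶠ x : Pt d, α (x, Finset.univ)

open scoped TensorProduct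

/-- The index set of the Majorana generators: one pair `(γ_c, γ'_c)` for each `d`-cube `c`
of the cubical lattice `ℤ^d` (a `d`-cube is identified with its base point `x ∈ ℤ^d`). -/
abbrev GenIdx (d : ℕ) := Pt d × Fin 2

/-- The real vector space with orthonormal basis indexed by `GenIdx d`. -/
abbrev GenSpace (d : ℕ) := GenIdx d →₀ ℝ

/-- The standard (positive-definite) bilinear form on `GenSpace d`, for which the basis
`{single i 1}` is orthonormal: `B f g = Σ_i f i * g i`. -/
noncomputable def stdBilin (d : ℕ) : GenSpace d →ₗ[ℝ] GenSpace d →ₗ[ℝ] ℝ :=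
  Finsupp.lsum ℝ (fun i => LinearMap.smulRight (LinearMap.id : ℝ →ₗ[ℝ] ℝ) (Finsupp.lapply i))

/-- The standard positive-definite quadratic form on `GenSpace d`. -/
noncomputable def stdQuadForm (d : ℕ) : QuadraticForm ℝ (GenSpace d) :=
  LinearMap.BilinMap.toQuadraticMap (stdBilin d)

/-- The complexified Clifford algebra of `(GenSpace d, stdQuadForm d)`. -/
noncomputable abbrev Cliff (d : ℕ) :=
  CliffordAlgebra (QuadraticForm.baseChange ℂ (stdQuadForm d))

/-- The Majorana generator `γ_c` attached to the `d`-cube `c`. -/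
noncomputable def γMaj {d : ℕ} (c : Pt d) : Cliff d :=
  CliffordAlgebra.ι (QuadraticForm.baseChange ℂ (stdQuadForm d))
    ((1 : ℂ) ⊗ₜ[ℝ] Finsupp.single (c, (0 : Fin 2)) (1 : ℝ))

/-- The Majorana generator `γ'_c` attached to the `d`-cube `c`. -/
noncomputable def γMaj' {d : ℕ} (c : Pt d) : Cliff d :=
  CliffordAlgebra.ι (QuadraticForm.baseChange ℂ (stdQuadForm d))
    ((1 : ℂ) ⊗ₜ[ℝ] Finsupp.single (c, (1 : Fin 2)) (1 : ℝ))

/-- The `(d−1)`-cell of the lattice with base point `x` perpendicular to the coordinate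
direction `i`. -/
def sigmaCell {d : ℕ} (x : Pt d) (i : Fin d) : LatCell d := (x, Finset.univ.erase i)

/-- `⁻σ`: the `d`-cube containing the `(d−1)`-cell `sigmaCell x i` on its negative
`x_i` side. (The cube on the positive side, `⁺σ`, has base point `x` itself.) -/
def negCube {d : ℕ} (x : Pt d) (i : Fin d) : Pt d := Function.update x i (x i - 1)

/-- The hopping operator `S_σ := i·γ_{L(σ)}·γ'_{R(σ)}` of the `(d−1)`-cell
`σ = sigmaCell x i`, with `(L(σ), R(σ)) = (⁻σ, ⁺σ)` if `i + d` is odd (`1`-based,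
so `i + d = i.val + 1 + d`) and `(L(σ), R(σ)) = (⁺σ, ⁻σ)` if `i + d` is even. -/
noncomputable def Sop {d : ℕ} (x : Pt d) (i : Fin d) : Cliff d :=
  if (i.val + 1 + d) % 2 = 1 then
    Complex.I • (γMaj (negCube x i) * γMaj' x)
  else
    Complex.I • (γMaj x * γMaj' (negCube x i))


section Aux
lemma stdBilin_single (d : ℕ) (v w : GenIdx d) :
    stdBilin d (Finsupp.single v 1) (Finsupp.single w 1) = if w = v then 1 else 0 := by
  simp [stdBilin, Finsupp.lsum_single, Finsupp.lapply_apply, Finsupp.single_apply]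

lemma stdQuadForm_single (d : ℕ) (v : GenIdx d) :
    stdQuadForm d (Finsupp.single v 1) = 1 := by
  have := stdBilin_single d v v
  simpa [stdQuadForm, LinearMap.BilinMap.toQuadraticMap_apply] using this

lemma polar_single (d : ℕ) (v w : GenIdx d) (h : v ≠ w) :
    QuadraticMap.polar (stdQuadForm d) (Finsupp.single v 1) (Finsupp.single w 1) = 0 := by
  rw [QuadraticMap.polar]
  simp only [stdQuadForm, LinearMap.BilinMap.toQuadraticMap_apply, map_add,
    LinearMap.add_apply]
  have h1 := stdBilin_single d v v
  have h2 := stdBilin_single d v w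
  have h3 := stdBilin_single d w v
  have h4 := stdBilin_single d w w
  rw [if_pos rfl] at h1 h4
  rw [if_neg h] at h3
  rw [if_neg (Ne.symm h)] at h2
  rw [h1, h2, h3, h4]; ring

noncomputable def gen {d : ℕ} (v : GenIdx d) : Cliff d :=
  CliffordAlgebra.ι (QuadraticForm.baseChange ℂ (stdQuadForm d))
    ((1 : ℂ) ⊗ₜ[ℝ] Finsupp.single v (1 : ℝ))

lemma gen_sq {d : ℕ} (v : GenIdx d) : gen v * gen v = 1 := by
  rw [gen, CliffordAlgebra.ι_sq_scalar, QuadraticForm.baseChange_tmul,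
    stdQuadForm_single]
  simp

lemma polar_base {d : ℕ} (v w : GenIdx d) (h : v ≠ w) :
    QuadraticMap.polar (QuadraticForm.baseChange ℂ (stdQuadForm d))
      ((1 : ℂ) ⊗ₜ[ℝ] Finsupp.single v (1 : ℝ)) ((1 : ℂ) ⊗ₜ[ℝ] Finsupp.single w (1 : ℝ)) = 0 := by
  rw [QuadraticMap.polar, ← TensorProduct.tmul_add]
  rw [QuadraticForm.baseChange_tmul, QuadraticForm.baseChange_tmul,
    QuadraticForm.baseChange_tmul]
  have hp := polar_single d v w h
  rw [QuadraticMap.polar] at hp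
  have : stdQuadForm d (Finsupp.single v 1 + Finsupp.single w 1)
      = stdQuadForm d (Finsupp.single v 1) + stdQuadForm d (Finsupp.single w 1) := by
    linarith [hp]
  rw [this]
  simp [add_smul]

lemma gen_anticomm {d : ℕ} (v w : GenIdx d) (h : v ≠ w) :
    gen v * gen w = -(gen w * gen v) := by
  rw [gen, gen, CliffordAlgebra.ι_mul_ι_comm, polar_base v w h]
  simp

noncomputable def sgn {d : ℕ} (v w : GenIdx d) : ℂ := if v = w then 1 else -1

lemma gen_comm {d : ℕ} (v w : GenIdx d) :
    gen v * gen w = sgn v w • (gen w * gen v) := by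
  by_cases h : v = w
  · simp [sgn, h]
  · rw [gen_anticomm v w h, sgn, if_neg h]; simp

lemma swap_one {d : ℕ} (v w : GenIdx d) (x : Cliff d) :
    gen v * (gen w * x) = sgn v w • (gen w * (gen v * x)) := by
  rw [← mul_assoc, gen_comm v w, smul_mul_assoc, mul_assoc]

lemma four_swap {d : ℕ} (v₁ v₂ v₃ v₄ : GenIdx d) :
    gen v₁ * gen v₂ * (gen v₃ * gen v₄) =
      ((sgn v₁ v₃ * sgn v₁ v₄ * sgn v₂ v₃ * sgn v₂ v₄)) •
        (gen v₃ * gen v₄ * (gen v₁ * gen v₂)) := by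
  calc gen v₁ * gen v₂ * (gen v₃ * gen v₄)
      = gen v₁ * (gen v₂ * (gen v₃ * gen v₄)) := by rw [mul_assoc]
    _ = gen v₁ * ((sgn v₂ v₃ * sgn v₂ v₄) • (gen v₃ * (gen v₄ * gen v₂))) := by
        rw [swap_one v₂ v₃, gen_comm v₂ v₄]
        simp only [mul_smul_comm, smul_smul]
    _ = (sgn v₂ v₃ * sgn v₂ v₄) • (gen v₁ * (gen v₃ * (gen v₄ * gen v₂))) := by
        rw [mul_smul_comm]
    _ = (sgn v₂ v₃ * sgn v₂ v₄) • ((sgn v₁ v₃ * sgn v₁ v₄) •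
          (gen v₃ * (gen v₄ * (gen v₁ * gen v₂)))) := by
        rw [swap_one v₁ v₃, swap_one v₁ v₄]
        simp only [mul_smul_comm, smul_smul]
    _ = _ := by
        rw [smul_smul, ← mul_assoc (gen v₃)]
        congr 1
        ring

def Lcube {d : ℕ} (x : Pt d) (i : Fin d) : Pt d :=
  if (i.val + 1 + d) % 2 = 1 then negCube x i else x
def Rcube {d : ℕ} (x : Pt d) (i : Fin d) : Pt d :=
  if (i.val + 1 + d) % 2 = 1 then x else negCube x i

lemma Sop_eq {d : ℕ} (x : Pt d) (i : Fin d) :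
    Sop x i = Complex.I • (gen (Lcube x i, 0) * gen (Rcube x i, 1)) := by
  rw [Sop, Lcube, Rcube]
  split <;> rfl

lemma sgn_pair {d : ℕ} (a a' : Pt d) (k : Fin 2) :
    sgn (a, k) (a', k) = (if a = a' then 1 else -1 : ℂ) := by
  rw [sgn]
  by_cases h : a = a'
  · simp [h]
  · rw [if_neg (by simpa using h), if_neg h]

lemma sgn_pair_ne {d : ℕ} (a a' : Pt d) : sgn (a, (0 : Fin 2)) (a', (1 : Fin 2)) = -1 := by
  rw [sgn, if_neg (by simp)]

lemma sgn_pair_ne' {d : ℕ} (a a' : Pt d) : sgn (a, (1 : Fin 2)) (a', (0 : Fin 2)) = -1 := by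
  rw [sgn, if_neg (by simp)]

lemma Sop_comm {d : ℕ} (x x' : Pt d) (i i' : Fin d) :
    Sop x i * Sop x' i' =
      (((if Lcube x i = Lcube x' i' then 1 else -1) *
        (if Rcube x i = Rcube x' i' then 1 else -1) : ℂ)) • (Sop x' i' * Sop x i) := by
  rw [Sop_eq, Sop_eq]
  rw [smul_mul_smul_comm, smul_mul_smul_comm]
  rw [four_swap]
  rw [sgn_pair _ _ 0, sgn_pair _ _ 1, sgn_pair_ne, sgn_pair_ne']
  rw [smul_smul, smul_smul]
  congr 1
  ring

end Aux

section Comb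
open Finset
open scoped Classical

variable {d : ℕ}

def Iset (i i' : Fin d) : Finset (Fin d) := (Finset.univ.erase i).erase i'

lemma mem_Iset {i i' j : Fin d} : j ∈ Iset i i' ↔ (j ≠ i ∧ j ≠ i') := by
  simp [Iset, and_comm]

lemma Iset_symm (i i' : Fin d) : Iset i i' = Iset i' i := by
  ext j; simp [mem_Iset, and_comm]

lemma Iset_card {i i' : Fin d} (h : i ≠ i') : (Iset i i').card = d - 2 := by
  rw [Iset, card_erase_of_mem (by simp [Ne.symm h]), card_erase_of_mem (by simp)]
  simp only [Finset.card_univ, Fintype.card_fin]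
  omega

def lnum (i i' j : Fin d) : ℕ := ((Iset i i').filter (fun k => k < j)).card

lemma lnum_symm (i i' j : Fin d) : lnum i i' j = lnum i' i j := by
  rw [lnum, lnum, Iset_symm]

def Zfst (i i' : Fin d) : Fin d → Sgn := fun j =>
  if j = i then (if lnum i i' i % 2 = 0 then Sgn.pls else Sgn.mns) else Sgn.dot

def Zsnd (i i' : Fin d) : Fin d → Sgn := fun j =>
  if j = i' then (if lnum i i' i' % 2 = 0 then Sgn.mns else Sgn.pls) else Sgn.dot

def eps1 (i i' : Fin d) : ℤ := if lnum i i' i % 2 = 0 then 1 else 0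
def eps2 (i i' : Fin d) : ℤ := if lnum i i' i' % 2 = 0 then 0 else 1

lemma Zfst_dot_iff {i i' j : Fin d} : Zfst i i' j = Sgn.dot ↔ j ≠ i := by
  rw [Zfst]
  by_cases h : j = i
  · subst h; rw [if_pos rfl]
    constructor
    · intro hc; split at hc <;> simp_all
    · intro hc; exact absurd rfl hc
  · simp [h]

lemma Zsnd_dot_iff {i i' j : Fin d} : Zsnd i i' j = Sgn.dot ↔ j ≠ i' := by
  rw [Zsnd]
  by_cases h : j = i'
  · subst h; rw [if_pos rfl]
    constructor
    · intro hc; split at hc <;> simp_all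
    · intro hc; exact absurd rfl hc
  · simp [h]

lemma bothDot_eq {i i' : Fin d} {z z' : Fin d → Sgn}
    (hz : ∀ j, z j = Sgn.dot ↔ j ≠ i) (hz' : ∀ j, z' j = Sgn.dot ↔ j ≠ i') :
    bothDot z z' = Iset i i' := by
  ext j
  simp [bothDot, mem_Iset, hz, hz']

/-- characterization of `cellFrom y univ z = sigmaCell x i`. -/
lemma cellFrom_eq_iff {y x : Pt d} {z : Fin d → Sgn} {i : Fin d} :
    cellFrom y Finset.univ z = sigmaCell x i ↔
      ((∀ j, z j = Sgn.dot ↔ j ≠ i) ∧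
        ∀ j, (if z j = Sgn.pls then y j + 1 else y j) = x j) := by
  rw [cellFrom, sigmaCell, Prod.mk.injEq]
  constructor
  · rintro ⟨h1, h2⟩
    constructor
    · intro j
      have := Finset.ext_iff.mp h2 j
      simpa using this
    · intro j
      have := congrFun h1 j
      simpa using this
  · rintro ⟨h1, h2⟩
    constructor
    · funext j
      have := h2 j
      simpa using this
    · ext j
      simp [h1 j]


lemma lnum_def (i i' j : Fin d) :
    (Finset.filter (fun k => k < j) (Iset i i')).card = lnum i i' j := rfl

lemma char_main {i i' : Fin d} (h : i ≠ i') (x x' y : Pt d)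
    (z z' : Fin d → Sgn) :
    (IntPairS (d - 2) Finset.univ z z' ∧
        cellFrom y Finset.univ z = sigmaCell x i ∧
        cellFrom y Finset.univ z' = sigmaCell x' i') ↔
      (z = Zfst i i' ∧ z' = Zsnd i i' ∧
        (∀ j, j ≠ i → y j = x j) ∧ x i = y i + eps1 i i' ∧
        (∀ j, j ≠ i' → y j = x' j) ∧ x' i' = y i' + eps2 i i') := by
  constructor
  · rintro ⟨⟨-, hcard, hpc⟩, hc1, hc2⟩
    rw [cellFrom_eq_iff] at hc1 hc2
    obtain ⟨hz, hy⟩ := hc1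
    obtain ⟨hz', hy'⟩ := hc2
    have hbd : bothDot z z' = Iset i i' := bothDot_eq hz hz'
    have hpci := hpc i (Finset.mem_univ i) (by rw [hbd]; simp [mem_Iset])
    have hpci' := hpc i' (Finset.mem_univ i') (by rw [hbd]; simp [mem_Iset])
    rw [hbd, pairCond, lnum_def] at hpci hpci'
    have hzi' : z' i = Sgn.dot := (hz' i).mpr h
    have hzi : z i' = Sgn.dot := (hz i').mpr (Ne.symm h)
    have hznd : z i ≠ Sgn.dot := fun hc => (hz i).mp hc rfl
    have hznd' : z' i' ≠ Sgn.dot := fun hc => (hz' i').mp hc rfl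
    have hzieq : z i = (if lnum i i' i % 2 = 0 then Sgn.pls else Sgn.mns) := by
      split at hpci <;> rename_i hp
      · rw [if_pos hp]
        rcases hpci with ⟨h1, -⟩ | ⟨h1, -⟩
        · exact h1
        · exact absurd h1 hznd
      · rw [if_neg hp]
        rcases hpci with ⟨h1, -⟩ | ⟨h1, -⟩
        · exact h1
        · exact absurd h1 hznd
    have hzieq' : z' i' = (if lnum i i' i' % 2 = 0 then Sgn.mns else Sgn.pls) := by
      split at hpci' <;> rename_i hp
      · rw [if_pos hp]
        rcases hpci' with ⟨h1, -⟩ | ⟨-, h1⟩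
        · exact absurd (hzi.symm.trans h1) (by simp)
        · exact h1
      · rw [if_neg hp]
        rcases hpci' with ⟨h1, -⟩ | ⟨-, h1⟩
        · exact absurd (hzi.symm.trans h1) (by simp)
        · exact h1
    refine ⟨?_, ?_, ?_, ?_, ?_, ?_⟩
    · funext j
      by_cases hj : j = i
      · subst hj; rw [Zfst, if_pos rfl]; exact hzieq
      · rw [Zfst, if_neg hj]; exact (hz j).mpr hj
    · funext j
      by_cases hj : j = i'
      · subst hj; rw [Zsnd, if_pos rfl]; exact hzieq'
      · rw [Zsnd, if_neg hj]; exact (hz' j).mpr hj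
    · intro j hj
      have := hy j
      rw [if_neg (by rw [(hz j).mpr hj]; simp)] at this
      exact this
    · have := hy i
      rw [hzieq] at this
      rw [eps1]
      split at this <;> rename_i hp
      · rw [if_pos hp, if_pos rfl] at *
        omega
      · rw [if_neg hp] at *
        rw [if_neg (by simp)] at this
        omega
    · intro j hj
      have := hy' j
      rw [if_neg (by rw [(hz' j).mpr hj]; simp)] at this
      exact this
    · have := hy' i'
      rw [hzieq'] at this
      rw [eps2]
      split at this <;> rename_i hp
      · rw [if_pos hp] at *
        rw [if_neg (by simp)] at this
        omega
      · rw [if_neg hp, if_pos rfl] at *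
        omega
  · rintro ⟨rfl, rfl, hy1, hy2, hy1', hy2'⟩
    have hzdot : ∀ j, Zfst i i' j = Sgn.dot ↔ j ≠ i := fun j => Zfst_dot_iff
    have hzdot' : ∀ j, Zsnd i i' j = Sgn.dot ↔ j ≠ i' := fun j => Zsnd_dot_iff
    have hbd : bothDot (Zfst i i') (Zsnd i i') = Iset i i' := bothDot_eq hzdot hzdot'
    refine ⟨⟨fun j hj => absurd (Finset.mem_univ j) hj, ?_, ?_⟩, ?_, ?_⟩
    · rw [hbd]; exact Iset_card h
    · intro j _ hj
      rw [hbd] at hj ⊢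
      have hji : j = i ∨ j = i' := by
        by_contra hc; push_neg at hc; exact hj (mem_Iset.mpr hc)
      rw [pairCond, lnum_def]
      rcases hji with rfl | rfl
      · split <;> rename_i hp
        · left
          refine ⟨?_, (hzdot' j).mpr h⟩
          rw [Zfst, if_pos rfl, if_pos hp]
        · left
          refine ⟨?_, (hzdot' j).mpr h⟩
          rw [Zfst, if_pos rfl, if_neg hp]
      · split <;> rename_i hp
        · right
          refine ⟨(hzdot j).mpr (Ne.symm h), ?_⟩
          rw [Zsnd, if_pos rfl, if_pos hp]
        · right
          refine ⟨(hzdot j).mpr (Ne.symm h), ?_⟩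
          rw [Zsnd, if_pos rfl, if_neg hp]
    · rw [cellFrom_eq_iff]
      refine ⟨hzdot, fun j => ?_⟩
      by_cases hj : j = i
      · subst hj
        rw [Zfst, if_pos rfl]
        rw [eps1] at hy2
        by_cases hp : lnum j i' j % 2 = 0
        · rw [if_pos hp] at hy2 ⊢
          rw [if_pos rfl]
          omega
        · rw [if_neg hp] at hy2 ⊢
          rw [if_neg (by simp)]
          omega
      · rw [Zfst, if_neg hj, if_neg (by simp)]
        exact hy1 j hj
    · rw [cellFrom_eq_iff]
      refine ⟨hzdot', fun j => ?_⟩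
      by_cases hj : j = i'
      · subst hj
        rw [Zsnd, if_pos rfl]
        rw [eps2] at hy2'
        by_cases hp : lnum i j j % 2 = 0
        · rw [if_pos hp] at hy2' ⊢
          rw [if_neg (by simp)]
          omega
        · rw [if_neg hp] at hy2' ⊢
          rw [if_pos rfl]
          omega
      · rw [Zsnd, if_neg hj, if_neg (by simp)]
        exact hy1' j hj

lemma term_indicator (A B C : Prop) [Decidable A] [Decidable B] [Decidable C] :
    (if A then (if B then (1 : ZMod 2) else 0) * (if C then 1 else 0) else 0)
      = if A ∧ B ∧ C then 1 else 0 := by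
  by_cases hA : A <;> by_cases hB : B <;> by_cases hC : C <;> simp [hA, hB, hC]

def Cnd (x x' : Pt d) (i i' : Fin d) : Prop :=
  (∀ j, j ≠ i' → Function.update x i (x i - eps1 i i') j = x' j) ∧
    x' i' = Function.update x i (x i - eps1 i i') i' + eps2 i i'

lemma update_iff (x y : Pt d) (i : Fin d) (e : ℤ) :
    ((∀ j, j ≠ i → y j = x j) ∧ x i = y i + e) ↔ y = Function.update x i (x i - e) := by
  constructor
  · rintro ⟨h1, h2⟩
    funext j
    by_cases hj : j = i
    · subst hj; rw [Function.update_self]; omega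
    · rw [Function.update_of_ne hj]; exact h1 j hj
  · rintro rfl
    constructor
    · intro j hj; rw [Function.update_of_ne hj]
    · rw [Function.update_self]; omega

lemma cup_eval {i i' : Fin d} (h : i ≠ i') (x x' y : Pt d) :
    latCup (d - 2) (indLat (sigmaCell x i)) (indLat (sigmaCell x' i')) (y, Finset.univ)
      = if (y = Function.update x i (x i - eps1 i i') ∧ Cnd x x' i i') then 1 else 0 := by
  classical
  rw [latCup, Finset.sum_filter]
  have hpt : ∀ p : (Fin d → Sgn) × (Fin d → Sgn),
      (if IntPairS (d - 2) (Finset.univ : Finset (Fin d)) p.1 p.2 then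
          indLat (sigmaCell x i) (cellFrom y Finset.univ p.1) *
            indLat (sigmaCell x' i') (cellFrom y Finset.univ p.2)
        else 0)
      = if (p = (Zfst i i', Zsnd i i') ∧ (y = Function.update x i (x i - eps1 i i') ∧ Cnd x x' i i')) then 1 else 0 := by
    intro p
    rw [indLat, indLat, term_indicator]
    refine if_congr ?_ rfl rfl
    rw [char_main h x x' y p.1 p.2]
    constructor
    · rintro ⟨h1, h2, h3, h4, h5, h6⟩
      have hyY : y = Function.update x i (x i - eps1 i i') := (update_iff x y i _).mp ⟨h3, h4⟩
      refine ⟨Prod.ext h1 h2, hyY, ?_, ?_⟩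
      · intro j hj; rw [← hyY]; exact h5 j hj
      · rw [← hyY]; exact h6
    · rintro ⟨hp, hyY, hC1, hC2⟩
      subst hyY
      refine ⟨congrArg Prod.fst hp, congrArg Prod.snd hp,
        ((update_iff x _ i _).mpr rfl).1, ((update_iff x _ i _).mpr rfl).2, hC1, hC2⟩
  rw [Finset.sum_congr rfl (fun p _ => hpt p)]
  by_cases hC : (y = Function.update x i (x i - eps1 i i') ∧ Cnd x x' i i')
  · simp only [hC, and_true]
    rw [Finset.sum_ite_eq' Finset.univ ((Zfst i i', Zsnd i i')) (fun _ => (1 : ZMod 2))]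
    simp
  · rw [if_neg hC]
    apply Finset.sum_eq_zero
    intro p _
    rw [if_neg (fun hc => hC hc.2)]

lemma finsum_ind (Y : Pt d) (C : Prop) [Decidable C] :
    (∑ᶠ y : Pt d, if (y = Y ∧ C) then (1 : ZMod 2) else 0) = if C then 1 else 0 := by
  by_cases hC : C
  · simp only [hC, and_true]
    rw [finsum_eq_single _ Y (fun z hz => if_neg hz)]
    simp
  · rw [if_neg hC]
    have : ∀ y : Pt d, (if (y = Y ∧ C) then (1 : ZMod 2) else 0) = 0 :=
      fun y => if_neg (fun hc => hC hc.2)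
    rw [finsum_congr this, finsum_zero]

lemma supp_fin (Y : Pt d) (C : Prop) [Decidable C] :
    (Function.support fun y : Pt d => if (y = Y ∧ C) then (1 : ZMod 2) else 0).Finite := by
  apply Set.Finite.subset (Set.finite_singleton Y)
  intro y hy
  rcases em (y = Y ∧ C) with hc | hc
  · exact hc.1
  · exact absurd (if_neg hc) hy

lemma int_total {i i' : Fin d} (h : i ≠ i') (x x' : Pt d) :
    intLat (latCup (d - 2) (indLat (sigmaCell x i)) (indLat (sigmaCell x' i'))
        + latCup (d - 2) (indLat (sigmaCell x' i')) (indLat (sigmaCell x i)))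
      = (if Cnd x x' i i' then 1 else 0) + (if Cnd x' x i' i then 1 else 0) := by
  classical
  rw [intLat]
  have he : ∀ y : Pt d,
      (latCup (d - 2) (indLat (sigmaCell x i)) (indLat (sigmaCell x' i'))
        + latCup (d - 2) (indLat (sigmaCell x' i')) (indLat (sigmaCell x i))) (y, Finset.univ)
      = (if (y = Function.update x i (x i - eps1 i i') ∧ Cnd x x' i i') then (1 : ZMod 2) else 0)
        + (if (y = Function.update x' i' (x' i' - eps1 i' i) ∧ Cnd x' x i' i) then 1 else 0) := by
    intro y
    rw [Pi.add_apply, cup_eval h x x' y, cup_eval (Ne.symm h) x' x y]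
  rw [finsum_congr he, finsum_add_distrib (supp_fin _ _) (supp_fin _ _),
    finsum_ind, finsum_ind]

lemma lnum_self (i i' : Fin d) :
    lnum i i' i + (if i' < i then 1 else 0) = i.val := by
  have hs : (Iset i i').filter (fun k => k < i) = (Finset.Iio i).erase i' := by
    ext k
    simp only [Finset.mem_filter, mem_Iset, Finset.mem_erase, Finset.mem_Iio]
    constructor
    · rintro ⟨⟨-, h2⟩, h3⟩; exact ⟨h2, h3⟩
    · rintro ⟨h2, h3⟩; exact ⟨⟨ne_of_lt h3, h2⟩, h3⟩
  rw [lnum, hs]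
  by_cases hlt : i' < i
  · rw [Finset.card_erase_of_mem (Finset.mem_Iio.mpr hlt), if_pos hlt, Fin.card_Iio]
    have : 1 ≤ i.val := by
      have := Fin.lt_def.mp hlt; omega
    omega
  · rw [Finset.erase_eq_of_notMem (by simpa using hlt), if_neg hlt, Fin.card_Iio]
    omega

def pv (d k : ℕ) : ℤ := if (k + 1 + d) % 2 = 1 then 1 else 0

lemma dicho {i i' : Fin d} (h : i ≠ i') :
    (eps1 i i' = pv d i.val ∧ eps2 i i' = pv d i'.val) ∨
      (eps1 i i' = 1 - pv d i.val ∧ eps2 i i' = 1 - pv d i'.val) := by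
  have f1 := lnum_self i i'
  have f2 := lnum_self i' i
  rw [lnum_symm i' i] at f2
  rw [eps1, eps2, pv, pv]
  rcases lt_or_gt_of_ne h with hlt | hlt
  · rw [if_neg (asymm hlt)] at f1
    rw [if_pos hlt] at f2
    have hv : i.val < i'.val := Fin.lt_def.mp hlt
    split_ifs <;> omega
  · rw [if_pos hlt] at f1
    rw [if_neg (asymm hlt)] at f2
    have hv : i'.val < i.val := Fin.lt_def.mp hlt
    split_ifs <;> omega

lemma eps_swap1 (i i' : Fin d) : eps1 i' i = 1 - eps2 i i' := by
  rw [eps1, eps2, lnum_symm i' i]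
  split_ifs <;> norm_num

lemma eps_swap2 (i i' : Fin d) : eps2 i' i = 1 - eps1 i i' := by
  rw [eps1, eps2, lnum_symm i' i]
  split_ifs <;> norm_num

/-- canonical form of all four conditions -/
def Cond3 (x x' : Pt d) (i i' : Fin d) (u v : ℤ) : Prop :=
  (∀ j, j ≠ i → j ≠ i' → x j = x' j) ∧ x i - x' i = u ∧ x' i' - x i' = v

lemma Cond3_symm {x x' : Pt d} {i i' : Fin d} {u v : ℤ} :
    Cond3 x' x i' i u v ↔ Cond3 x x' i i' v u := by
  constructor
  · rintro ⟨h1, h2, h3⟩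
    exact ⟨fun j hj hj' => (h1 j hj' hj).symm, by omega, by omega⟩
  · rintro ⟨h1, h2, h3⟩
    exact ⟨fun j hj hj' => (h1 j hj' hj).symm, by omega, by omega⟩

lemma Cnd_iff {i i' : Fin d} (h : i ≠ i') (x x' : Pt d) :
    Cnd x x' i i' ↔ Cond3 x x' i i' (eps1 i i') (eps2 i i') := by
  rw [Cnd, Cond3]
  constructor
  · rintro ⟨h1, h2⟩
    refine ⟨fun j hj hj' => ?_, ?_, ?_⟩
    · have := h1 j hj'
      rwa [Function.update_of_ne hj] at this
    · have := h1 i (h)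
      rw [Function.update_self] at this
      omega
    · rw [Function.update_of_ne (Ne.symm h)] at h2
      omega
  · rintro ⟨h1, h2, h3⟩
    constructor
    · intro j hj
      by_cases hji : j = i
      · subst hji; rw [Function.update_self]; omega
      · rw [Function.update_of_ne hji]; exact h1 j hji hj
    · rw [Function.update_of_ne (Ne.symm h)]; omega

lemma Lcube_apply (x : Pt d) (i j : Fin d) :
    Lcube x i j = x j - (if j = i then pv d i.val else 0) := by
  rw [Lcube, pv, negCube]
  by_cases hc : (i.val + 1 + d) % 2 = 1
  · rw [if_pos hc, if_pos hc, Function.update_apply]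
    split_ifs <;> [skip; ring]
    subst ‹j = i›; ring
  · rw [if_neg hc, if_neg hc]
    split_ifs <;> ring

lemma Rcube_apply (x : Pt d) (i j : Fin d) :
    Rcube x i j = x j - (if j = i then 1 - pv d i.val else 0) := by
  rw [Rcube, pv, negCube]
  by_cases hc : (i.val + 1 + d) % 2 = 1
  · rw [if_pos hc, if_pos hc]
    split_ifs <;> ring
  · rw [if_neg hc, if_neg hc, Function.update_apply]
    split_ifs <;> [skip; ring]
    subst ‹j = i›; ring

lemma sub_ind_eq_iff {i i' : Fin d} (h : i ≠ i') (x x' : Pt d) (F G : Pt d)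
    (e e' : ℤ) (hF : ∀ j, F j = x j - (if j = i then e else 0))
    (hG : ∀ j, G j = x' j - (if j = i' then e' else 0)) :
    F = G ↔ Cond3 x x' i i' e e' := by
  rw [funext_iff, Cond3]
  constructor
  · intro hf
    refine ⟨fun j hj hj' => ?_, ?_, ?_⟩
    · have := hf j; rw [hF j, hG j, if_neg hj, if_neg hj'] at this; omega
    · have := hf i; rw [hF i, hG i, if_pos rfl, if_neg h] at this; omega
    · have := hf i'; rw [hF i', hG i', if_neg (Ne.symm h), if_pos rfl] at this; omega
  · rintro ⟨h1, h2, h3⟩ j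
    rw [hF j, hG j]
    by_cases hji : j = i
    · subst hji; rw [if_pos rfl, if_neg h]; omega
    · by_cases hji' : j = i'
      · subst hji'; rw [if_neg hji, if_pos rfl]; omega
      · rw [if_neg hji, if_neg hji']; have := h1 j hji hji'; omega

lemma Lcube_eq_iff {i i' : Fin d} (h : i ≠ i') (x x' : Pt d) :
    Lcube x i = Lcube x' i' ↔ Cond3 x x' i i' (pv d i.val) (pv d i'.val) :=
  sub_ind_eq_iff h x x' _ _ _ _ (Lcube_apply x i) (Lcube_apply x' i')

lemma Rcube_eq_iff {i i' : Fin d} (h : i ≠ i') (x x' : Pt d) :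
    Rcube x i = Rcube x' i' ↔ Cond3 x x' i i' (1 - pv d i.val) (1 - pv d i'.val) :=
  sub_ind_eq_iff h x x' _ _ _ _ (Rcube_apply x i) (Rcube_apply x' i')

lemma key_sum {i i' : Fin d} (h : i ≠ i') (x x' : Pt d) :
    ((if Cnd x x' i i' then (1 : ZMod 2) else 0) + (if Cnd x' x i' i then 1 else 0))
      = (if Lcube x i = Lcube x' i' then 1 else 0)
        + (if Rcube x i = Rcube x' i' then 1 else 0) := by
  rcases dicho h with ⟨hA, hB⟩ | ⟨hA, hB⟩
  · have e1 : Cnd x x' i i' ↔ Lcube x i = Lcube x' i' := by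
      rw [Cnd_iff h, Lcube_eq_iff h, hA, hB]
    have e2 : Cnd x' x i' i ↔ Rcube x i = Rcube x' i' := by
      rw [Cnd_iff (Ne.symm h), Rcube_eq_iff h, eps_swap1 i i', eps_swap2 i i', hA, hB, Cond3_symm]
    rw [if_congr e1 rfl rfl, if_congr e2 rfl rfl]
  · have e1 : Cnd x x' i i' ↔ Rcube x i = Rcube x' i' := by
      rw [Cnd_iff h, Rcube_eq_iff h, hA, hB]
    have e2 : Cnd x' x i' i ↔ Lcube x i = Lcube x' i' := by
      rw [Cnd_iff (Ne.symm h), Lcube_eq_iff h, eps_swap1 i i', eps_swap2 i i', hA, hB, Cond3_symm]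
      constructor
      · rintro ⟨h1, h2, h3⟩; exact ⟨h1, by omega, by omega⟩
      · rintro ⟨h1, h2, h3⟩; exact ⟨h1, by omega, by omega⟩
    rw [if_congr e1 rfl rfl, if_congr e2 rfl rfl, add_comm]

lemma cup_apply_zero (hd : 2 ≤ d) (x x' y : Pt d) (i : Fin d) :
    latCup (d - 2) (indLat (sigmaCell x i)) (indLat (sigmaCell x' i)) (y, Finset.univ)
      = 0 := by
  rw [latCup]
  apply Finset.sum_eq_zero
  intro p hp
  rw [Finset.mem_filter] at hp
  obtain ⟨-, -, hcard, -⟩ := hp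
  by_cases h1 : cellFrom y Finset.univ p.1 = sigmaCell x i
  · by_cases h2 : cellFrom y Finset.univ p.2 = sigmaCell x' i
    · exfalso
      rw [cellFrom_eq_iff] at h1 h2
      have hbd := bothDot_eq h1.1 h2.1
      rw [hbd] at hcard
      have hch : (Iset i i).card = d - 1 := by
        rw [Iset, Finset.erase_idem, Finset.card_erase_of_mem (Finset.mem_univ i)]
        simp
      omega
    · simp [indLat, h2]
  · simp [indLat, h1]

lemma Lcube_inj (x x' : Pt d) (i : Fin d) (hL : Lcube x i = Lcube x' i) : x = x' := by
  funext j
  have := congrFun hL j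
  rw [Lcube_apply, Lcube_apply] at this
  omega

lemma Rcube_inj (x x' : Pt d) (i : Fin d) (hL : Rcube x i = Rcube x' i) : x = x' := by
  funext j
  have := congrFun hL j
  rw [Rcube_apply, Rcube_apply] at this
  omega

lemma sign_bridge (L R : Prop) [Decidable L] [Decidable R] :
    ((if L then (1 : ℂ) else -1) * (if R then 1 else -1))
      = (-1 : ℂ) ^ (((if L then (1 : ZMod 2) else 0) + (if R then 1 else 0)).val) := by
  by_cases hL : L <;> by_cases hR : R <;>
    simp only [hL, hR, if_true, if_false]
  · rw [show ((1 + 1 : ZMod 2)).val = 0 from rfl, pow_zero]; norm_num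
  · rw [show ((1 + 0 : ZMod 2)).val = 1 from rfl, pow_one]; norm_num
  · rw [show ((0 + 1 : ZMod 2)).val = 1 from rfl, pow_one]; norm_num
  · rw [show ((0 + 0 : ZMod 2)).val = 0 from rfl, pow_zero]; norm_num

end Comb

/-- In the complexified Clifford algebra generated by the Majorana
operators `{γ_c, γ'_c}` (one pair per `d`-cube of `ℤ^d`, squaring to `1` and pairwise
anticommuting), the hopping operators of any two `(d−1)`-cells `σ = sigmaCell x i`,
`σ' = sigmaCell x' i'` satisfy
`S_σ S_{σ'} = (−1)^{∫ (𝟙_σ ∪_{d−2} 𝟙_{σ'} + 𝟙_{σ'} ∪_{d−2} 𝟙_σ)} · S_{σ'} S_σ`. -/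
theorem hopping_commutation (d : ℕ) (hd : 2 ≤ d) (x x' : Pt d) (i i' : Fin d) :
    Sop x i * Sop x' i' =
      ((-1 : ℂ) ^
        (intLat (latCup (d - 2) (indLat (sigmaCell x i)) (indLat (sigmaCell x' i'))
          + latCup (d - 2) (indLat (sigmaCell x' i')) (indLat (sigmaCell x i)))).val) •
        (Sop x' i' * Sop x i) := by
  rw [Sop_comm]
  congr 1
  by_cases hii : i = i'
  · subst hii
    have hz : ∀ y : Pt d,
        (latCup (d - 2) (indLat (sigmaCell x i)) (indLat (sigmaCell x' i))
          + latCup (d - 2) (indLat (sigmaCell x' i)) (indLat (sigmaCell x i)))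
          (y, Finset.univ) = 0 := by
      intro y
      rw [Pi.add_apply, cup_apply_zero hd, cup_apply_zero hd, add_zero]
    rw [intLat, finsum_congr hz, finsum_zero]
    rw [show ((0 : ZMod 2)).val = 0 from rfl, pow_zero]
    by_cases hx : x = x'
    · subst hx; rw [if_pos rfl, if_pos rfl]; norm_num
    · rw [if_neg (fun hc => hx (Lcube_inj x x' i hc)),
        if_neg (fun hc => hx (Rcube_inj x x' i hc))]
      norm_num
  · rw [int_total hii x x', key_sum hii x x']
    exact sign_bridge _ _
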